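/- Let c ∈ {−1, 1}, let I, J ⊆ ℝ be open intervals, D = I × J, and f : I → ℝ, g : J → ℝ smooth with 1 − c f(u) g(v) nowhere zero on D. Fix τ ∈ ℝ, τ ≠ 0, with τ² − c f(u)² ≠ 0 and τ² − c g(v)² ≠ 0 on D, and define H[τ](u,v) = (τ f(u) + τ^{−1} g(v))/(1 − c f(u) g(v)), λ(u,τ) = τ(1 − c f(u)²)/(τ² − c f(u)²), ν(v,τ) = τ(1 − c g(v)²)/(τ² − c g(v)²). Let ω, Q, R : D → ℝ be smooth, and let Ψ⁺, Ψ⁻ : D → SL₂(ℝ) be smooth solutions of ∂_u Ψ^± = Ψ^± U[±τ], ∂_v Ψ^± = Ψ^± V[±τ], where U[τ] = [[−ω_u/4, −Q e^{−ω/2}], [(1/2)(H[τ] + c) λ(u,τ) e^{ω/2}, ω_u/4]] and V[τ] = [[ω_v/4, −(1/2)(H[τ] − c) ν(v,τ) e^{ω/2}], [R e^{−ω/2}, −ω_v/4]]. Define F = Ψ⁺ (Ψ⁻)^{−1} and N = −Ψ⁺ k′ (Ψ⁻)^{−1}, k′ = diag(−1,1). Then, with ⟨X,Y⟩ = (1/2)(tr(XY)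 − tr(X)tr(Y)) on 2×2 real matrices: ⟨F,F⟩ = −1; ⟨∂_u F, ∂_u F⟩ = ⟨∂_v F, ∂_v F⟩ = 0; 2⟨∂_u F, ∂_v F⟩ = τ²(1 − c f²)(1 − c g²) e^ω/((τ² − c f²)(τ² − c g²)); ⟨N,N⟩ = 1; and ⟨N, F⟩ = ⟨N, ∂_u F⟩ = ⟨N, ∂_v F⟩ = 0. -/

import Mathlib

open Matrix

noncomputable section

/-- Partial derivative in the first variable. -/
def pd1 (f : ℝ → ℝ → ℝ) (u v : ℝ) : ℝ := deriv (fun x => f x v) u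

/-- Partial derivative in the second variable. -/
def pd2 (f : ℝ → ℝ → ℝ) (u v : ℝ) : ℝ := deriv (fun y => f u y) v

/-- Smoothness of a two-variable function on a set. -/
def Smooth2 (f : ℝ → ℝ → ℝ) (s : Set (ℝ × ℝ)) : Prop :=
  ContDiffOn ℝ (⊤ : ℕ∞) (fun p : ℝ × ℝ => f p.1 p.2) s

/-- Entrywise derivative of a matrix-valued function of a real variable. -/
def mderiv (f : ℝ → Matrix (Fin 2) (Fin 2) ℝ) (x : ℝ) : Matrix (Fin 2) (Fin 2) ℝ :=
  Matrix.of fun i j => deriv (fun t => f t i j) x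

/-- The matrix `U[τ]` of the Lax pair with two variable spectral parameters. -/
def Umat5 (c : ℝ) (ω Q H : ℝ → ℝ → ℝ) (lam : ℝ → ℝ) (u v : ℝ) : Matrix (Fin 2) (Fin 2) ℝ :=
  !![-(pd1 ω u v) / 4, -(Q u v) * Real.exp (-(ω u v) / 2);
     (1 / 2) * (H u v + c) * lam u * Real.exp (ω u v / 2), (pd1 ω u v) / 4]

/-- The matrix `V[τ]` of the Lax pair with two variable spectral parameters. -/
def Vmat5 (c : ℝ) (ω R H : ℝ → ℝ → ℝ) (nu : ℝ → ℝ) (u v : ℝ) : Matrix (Fin 2) (Fin 2) ℝ :=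
  !![(pd2 ω u v) / 4, -((1 / 2) * (H u v - c) * nu v * Real.exp (ω u v / 2));
     R u v * Real.exp (-(ω u v) / 2), -(pd2 ω u v) / 4]

/-- The matrix `k′ = diag(−1, 1)`. -/
def kmat : Matrix (Fin 2) (Fin 2) ℝ := !![-1, 0; 0, 1]

/-- The scalar product `⟨X,Y⟩ = (1/2)(tr(XY) − tr(X)tr(Y))` (the metric of `E⁴₂ = M₂ℝ`). -/
def form2 (X Y : Matrix (Fin 2) (Fin 2) ℝ) : ℝ :=
  (1 / 2) * ((X * Y).trace - X.trace * Y.trace)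

/- Auxiliary lemmas -/

lemma myinv_eq_adj {A : Matrix (Fin 2) (Fin 2) ℝ} (h : A.det = 1) : A⁻¹ = A.adjugate := by
  rw [Matrix.inv_def, h, Ring.inverse_one, one_smul]

lemma form2_self (X : Matrix (Fin 2) (Fin 2) ℝ) : form2 X X = -X.det := by
  simp [form2, Matrix.trace_fin_two, Matrix.det_fin_two, Matrix.mul_apply, Fin.sum_univ_two]
  ring

lemma form2_conj (P M X Y : Matrix (Fin 2) (Fin 2) ℝ) :
    form2 (P * X * M) (P * Y * M) = P.det * M.det * form2 X Y := by
  simp [form2, Matrix.trace_fin_two, Matrix.det_fin_two, Matrix.mul_apply, Fin.sum_univ_two]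
  ring

lemma adj_traceless {A : Matrix (Fin 2) (Fin 2) ℝ} (h : A 0 0 + A 1 1 = 0) :
    A.adjugate = -A := by
  rw [Matrix.adjugate_fin_two]
  ext i j
  fin_cases i <;> fin_cases j <;> simp <;> linarith

lemma hasDerivAt_adj {M : ℝ → Matrix (Fin 2) (Fin 2) ℝ} {M' : Matrix (Fin 2) (Fin 2) ℝ} {u : ℝ}
    (hM : ∀ i j, HasDerivAt (fun x => M x i j) (M' i j) u) (i j : Fin 2) :
    HasDerivAt (fun x => (M x).adjugate i j) (M'.adjugate i j) u := by
  fin_cases i <;> fin_cases j <;> simp [Matrix.adjugate_fin_two] <;>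
    first
      | exact hM _ _
      | exact (hM _ _).neg

lemma hasDerivAt_entry_mul {P N : ℝ → Matrix (Fin 2) (Fin 2) ℝ}
    {P' N' : Matrix (Fin 2) (Fin 2) ℝ} {u : ℝ}
    (hP : ∀ i j, HasDerivAt (fun x => P x i j) (P' i j) u)
    (hN : ∀ i j, HasDerivAt (fun x => N x i j) (N' i j) u) (i j : Fin 2) :
    HasDerivAt (fun x => (P x * N x) i j) ((P' * N u + P u * N') i j) u := by
  have h : HasDerivAt (fun x => P x i 0 * N x 0 j + P x i 1 * N x 1 j) _ u := ((hP i 0).mul (hN 0 j)).add ((hP i 1).mul (hN 1 j))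
  have heq : (fun x => (P x * N x) i j) = fun x => P x i 0 * N x 0 j + P x i 1 * N x 1 j := by
    funext x; simp [Matrix.mul_apply, Fin.sum_univ_two]
  rw [heq]
  convert h using 1
  simp [Matrix.mul_apply, Fin.sum_univ_two, Matrix.add_apply]
  ring

lemma form2_lower_upper (a b : ℝ) : form2 !![0, 0; a, 0] !![0, b; 0, 0] = a * b / 2 := by
  simp [form2, Matrix.trace_fin_two, Matrix.mul_apply, Fin.sum_univ_two]
  ring

lemma form2_negk_negk : form2 (-kmat) (-kmat) = 1 := by
  simp [form2, kmat, Matrix.trace_fin_two, Matrix.mul_apply, Fin.sum_univ_two]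
  norm_num

lemma form2_negk_one : form2 (-kmat) (1 : Matrix (Fin 2) (Fin 2) ℝ) = 0 := by
  simp [form2, kmat, Matrix.trace_fin_two, Matrix.mul_apply, Fin.sum_univ_two]

lemma form2_negk_lower (a : ℝ) : form2 (-kmat) !![0, 0; a, 0] = 0 := by
  simp [form2, kmat, Matrix.trace_fin_two, Matrix.mul_apply, Fin.sum_univ_two]

lemma form2_negk_upper (b : ℝ) : form2 (-kmat) !![0, b; 0, 0] = 0 := by
  simp [form2, kmat, Matrix.trace_fin_two, Matrix.mul_apply, Fin.sum_univ_two]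

set_option maxHeartbeats 3200000 in
/-- Theorem 6.9: Lax representation with two independent variable spectral
parameters and the immersion formula `F^{(−1)}[τ]` in anti de Sitter space `H³₁`:
`F = Ψ⁺(Ψ⁻)⁻¹` takes values in `H³₁ = {⟨X,X⟩ = −1}`, is conformal with
`2⟨F_u,F_v⟩ = τ²(1−cf²)(1−cg²)e^ω/((τ²−cf²)(τ²−cg²))`, and `N = −Ψ⁺k′(Ψ⁻)⁻¹` is a
unit normal. -/
theorem statement5
    (c : ℝ) (hc : c = -1 ∨ c = 1)
    (I J : Set ℝ)
    (hIopen : IsOpen I) (hIint : I.OrdConnected)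
    (hJopen : IsOpen J) (hJint : J.OrdConnected)
    (f g : ℝ → ℝ)
    (hf : ContDiffOn ℝ (⊤ : ℕ∞) f I) (hg : ContDiffOn ℝ (⊤ : ℕ∞) g J)
    (hfg : ∀ u ∈ I, ∀ v ∈ J, 1 - c * f u * g v ≠ 0)
    (τ : ℝ) (hτ : τ ≠ 0)
    (hτf : ∀ u ∈ I, τ ^ 2 - c * (f u) ^ 2 ≠ 0)
    (hτg : ∀ v ∈ J, τ ^ 2 - c * (g v) ^ 2 ≠ 0)
    (HT : ℝ → ℝ → ℝ → ℝ)
    (hHT : ∀ t u v, HT t u v = (t * f u + t⁻¹ * g v) / (1 - c * f u * g v))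
    (lam : ℝ → ℝ → ℝ)
    (hlam : ∀ t u, lam t u = t * (1 - c * (f u) ^ 2) / (t ^ 2 - c * (f u) ^ 2))
    (nu : ℝ → ℝ → ℝ)
    (hnu : ∀ t v, nu t v = t * (1 - c * (g v) ^ 2) / (t ^ 2 - c * (g v) ^ 2))
    (ω Q R : ℝ → ℝ → ℝ)
    (hω : Smooth2 ω (I ×ˢ J)) (hQ : Smooth2 Q (I ×ˢ J)) (hR : Smooth2 R (I ×ˢ J))
    (Ψp Ψm : ℝ → ℝ → Matrix (Fin 2) (Fin 2) ℝ)
    (hΨpsmooth : ∀ i j, ContDiffOn ℝ (⊤ : ℕ∞) (fun p : ℝ × ℝ => Ψp p.1 p.2 i j) (I ×ˢ J))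
    (hΨmsmooth : ∀ i j, ContDiffOn ℝ (⊤ : ℕ∞) (fun p : ℝ × ℝ => Ψm p.1 p.2 i j) (I ×ˢ J))
    (hΨpdet : ∀ u ∈ I, ∀ v ∈ J, (Ψp u v).det = 1)
    (hΨmdet : ∀ u ∈ I, ∀ v ∈ J, (Ψm u v).det = 1)
    (hLaxUp : ∀ u ∈ I, ∀ v ∈ J,
      mderiv (fun x => Ψp x v) u = Ψp u v * Umat5 c ω Q (HT τ) (lam τ) u v)
    (hLaxVp : ∀ u ∈ I, ∀ v ∈ J,
      mderiv (fun y => Ψp u y) v = Ψp u v * Vmat5 c ω R (HT τ) (nu τ) u v)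
    (hLaxUm : ∀ u ∈ I, ∀ v ∈ J,
      mderiv (fun x => Ψm x v) u = Ψm u v * Umat5 c ω Q (HT (-τ)) (lam (-τ)) u v)
    (hLaxVm : ∀ u ∈ I, ∀ v ∈ J,
      mderiv (fun y => Ψm u y) v = Ψm u v * Vmat5 c ω R (HT (-τ)) (nu (-τ)) u v)
    (F N : ℝ → ℝ → Matrix (Fin 2) (Fin 2) ℝ)
    (hF : ∀ u v, F u v = Ψp u v * (Ψm u v)⁻¹)
    (hN : ∀ u v, N u v = -(Ψp u v * kmat * (Ψm u v)⁻¹)) :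
    ∀ u ∈ I, ∀ v ∈ J,
      form2 (F u v) (F u v) = -1 ∧
      form2 (mderiv (fun x => F x v) u) (mderiv (fun x => F x v) u) = 0 ∧
      form2 (mderiv (fun y => F u y) v) (mderiv (fun y => F u y) v) = 0 ∧
      2 * form2 (mderiv (fun x => F x v) u) (mderiv (fun y => F u y) v)
        = τ ^ 2 * (1 - c * (f u) ^ 2) * (1 - c * (g v) ^ 2) * Real.exp (ω u v) /
            ((τ ^ 2 - c * (f u) ^ 2) * (τ ^ 2 - c * (g v) ^ 2)) ∧
      form2 (N u v) (N u v) = 1 ∧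
      form2 (N u v) (F u v) = 0 ∧
      form2 (N u v) (mderiv (fun x => F x v) u) = 0 ∧
      form2 (N u v) (mderiv (fun y => F u y) v) = 0 := by
  intro u hu v hv
  have dP : (Ψp u v).det = 1 := hΨpdet u hu v hv
  have dM : (Ψm u v).det = 1 := hΨmdet u hu v hv
  have dAdj : ((Ψm u v).adjugate).det = 1 := by
    rw [Matrix.det_adjugate, dM]; simp
  -- negation relations for spectral quantities
  have hHTn : HT (-τ) u v = - HT τ u v := by rw [hHT, hHT, inv_neg]; ring
  have hlamn : lam (-τ) u = - lam τ u := by rw [hlam, hlam]; ring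
  have hnun : nu (-τ) v = - nu τ v := by rw [hnu, hnu]; ring
  -- the difference matrices
  have hAmat : Umat5 c ω Q (HT τ) (lam τ) u v - Umat5 c ω Q (HT (-τ)) (lam (-τ)) u v
      = !![0, 0; c * lam τ u * Real.exp (ω u v / 2), 0] := by
    ext i j
    fin_cases i <;> fin_cases j <;> simp [Umat5, hHTn, hlamn] <;> ring
  have hBmat : Vmat5 c ω R (HT τ) (nu τ) u v - Vmat5 c ω R (HT (-τ)) (nu (-τ)) u v
      = !![0, c * nu τ v * Real.exp (ω u v / 2); 0, 0] := by
    ext i j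
    fin_cases i <;> fin_cases j <;> simp [Vmat5, hHTn, hnun] <;> ring
  -- entrywise derivatives of Ψp, Ψm in the first variable
  have hPu : ∀ i j, HasDerivAt (fun x => Ψp x v i j)
      ((Ψp u v * Umat5 c ω Q (HT τ) (lam τ) u v) i j) u := by
    intro i j
    have hcd := ((hΨpsmooth i j).contDiffAt
      ((hIopen.prod hJopen).mem_nhds (Set.mk_mem_prod hu hv))).differentiableAt (by simp)
    have hdiff : DifferentiableAt ℝ (fun x => Ψp x v i j) u :=
      hcd.comp (f := fun x : ℝ => (x, v)) u (differentiableAt_id.prodMk (differentiableAt_const v))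
    have hval : deriv (fun x => Ψp x v i j) u
        = (Ψp u v * Umat5 c ω Q (HT τ) (lam τ) u v) i j := by
      have h : mderiv (fun x => Ψp x v) u i j
          = (Ψp u v * Umat5 c ω Q (HT τ) (lam τ) u v) i j := by
        rw [hLaxUp u hu v hv]
      simpa [mderiv] using h
    exact hval ▸ hdiff.hasDerivAt
  have hMu : ∀ i j, HasDerivAt (fun x => Ψm x v i j)
      ((Ψm u v * Umat5 c ω Q (HT (-τ)) (lam (-τ)) u v) i j) u := by
    intro i j
    have hcd := ((hΨmsmooth i j).contDiffAt
      ((hIopen.prod hJopen).mem_nhds (Set.mk_mem_prod hu hv))).differentiableAt (by simp)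
    have hdiff : DifferentiableAt ℝ (fun x => Ψm x v i j) u :=
      hcd.comp (f := fun x : ℝ => (x, v)) u (differentiableAt_id.prodMk (differentiableAt_const v))
    have hval : deriv (fun x => Ψm x v i j) u
        = (Ψm u v * Umat5 c ω Q (HT (-τ)) (lam (-τ)) u v) i j := by
      have h : mderiv (fun x => Ψm x v) u i j
          = (Ψm u v * Umat5 c ω Q (HT (-τ)) (lam (-τ)) u v) i j := by
        rw [hLaxUm u hu v hv]
      simpa [mderiv] using h
    exact hval ▸ hdiff.hasDerivAt
  -- entrywise derivatives of Ψp, Ψm in the second variable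
  have hPv : ∀ i j, HasDerivAt (fun y => Ψp u y i j)
      ((Ψp u v * Vmat5 c ω R (HT τ) (nu τ) u v) i j) v := by
    intro i j
    have hcd := ((hΨpsmooth i j).contDiffAt
      ((hIopen.prod hJopen).mem_nhds (Set.mk_mem_prod hu hv))).differentiableAt (by simp)
    have hdiff : DifferentiableAt ℝ (fun y => Ψp u y i j) v :=
      hcd.comp v ((differentiableAt_const u).prodMk differentiableAt_id)
    have hval : deriv (fun y => Ψp u y i j) v
        = (Ψp u v * Vmat5 c ω R (HT τ) (nu τ) u v) i j := by
      have h : mderiv (fun y => Ψp u y) v i j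
          = (Ψp u v * Vmat5 c ω R (HT τ) (nu τ) u v) i j := by
        rw [hLaxVp u hu v hv]
      simpa [mderiv] using h
    exact hval ▸ hdiff.hasDerivAt
  have hMv : ∀ i j, HasDerivAt (fun y => Ψm u y i j)
      ((Ψm u v * Vmat5 c ω R (HT (-τ)) (nu (-τ)) u v) i j) v := by
    intro i j
    have hcd := ((hΨmsmooth i j).contDiffAt
      ((hIopen.prod hJopen).mem_nhds (Set.mk_mem_prod hu hv))).differentiableAt (by simp)
    have hdiff : DifferentiableAt ℝ (fun y => Ψm u y i j) v :=
      hcd.comp v ((differentiableAt_const u).prodMk differentiableAt_id)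
    have hval : deriv (fun y => Ψm u y i j) v
        = (Ψm u v * Vmat5 c ω R (HT (-τ)) (nu (-τ)) u v) i j := by
      have h : mderiv (fun y => Ψm u y) v i j
          = (Ψm u v * Vmat5 c ω R (HT (-τ)) (nu (-τ)) u v) i j := by
        rw [hLaxVm u hu v hv]
      simpa [mderiv] using h
    exact hval ▸ hdiff.hasDerivAt
  -- trace-zero facts
  have hUtr : (Umat5 c ω Q (HT (-τ)) (lam (-τ)) u v).adjugate
      = -(Umat5 c ω Q (HT (-τ)) (lam (-τ)) u v) := by
    apply adj_traceless; simp [Umat5]; ring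
  have hVtr : (Vmat5 c ω R (HT (-τ)) (nu (-τ)) u v).adjugate
      = -(Vmat5 c ω R (HT (-τ)) (nu (-τ)) u v) := by
    apply adj_traceless; simp [Vmat5]; ring
  -- derivative of F in first variable
  have hFu : mderiv (fun x => F x v) u
      = Ψp u v * (Umat5 c ω Q (HT τ) (lam τ) u v
          - Umat5 c ω Q (HT (-τ)) (lam (-τ)) u v) * (Ψm u v).adjugate := by
    have hmat : (Ψp u v * Umat5 c ω Q (HT τ) (lam τ) u v) * (Ψm u v).adjugate
        + Ψp u v * (Ψm u v * Umat5 c ω Q (HT (-τ)) (lam (-τ)) u v).adjugate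
        = Ψp u v * (Umat5 c ω Q (HT τ) (lam τ) u v
            - Umat5 c ω Q (HT (-τ)) (lam (-τ)) u v) * (Ψm u v).adjugate := by
      rw [Matrix.adjugate_mul_distrib, hUtr]
      noncomm_ring
    ext i j
    show deriv (fun x => F x v i j) u = _
    have hee : (fun x => F x v i j) =ᶠ[nhds u]
        (fun x => (Ψp x v * (Ψm x v).adjugate) i j) := by
      filter_upwards [hIopen.mem_nhds hu] with x hx
      rw [hF, myinv_eq_adj (hΨmdet x hx v hv)]
    rw [hee.deriv_eq]
    have hD := hasDerivAt_entry_mul hPu (fun i j => hasDerivAt_adj hMu i j) i j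
    rw [hD.deriv]
    exact congrFun (congrFun hmat i) j
  -- derivative of F in second variable
  have hFv : mderiv (fun y => F u y) v
      = Ψp u v * (Vmat5 c ω R (HT τ) (nu τ) u v
          - Vmat5 c ω R (HT (-τ)) (nu (-τ)) u v) * (Ψm u v).adjugate := by
    have hmat : (Ψp u v * Vmat5 c ω R (HT τ) (nu τ) u v) * (Ψm u v).adjugate
        + Ψp u v * (Ψm u v * Vmat5 c ω R (HT (-τ)) (nu (-τ)) u v).adjugate
        = Ψp u v * (Vmat5 c ω R (HT τ) (nu τ) u v
            - Vmat5 c ω R (HT (-τ)) (nu (-τ)) u v) * (Ψm u v).adjugate := by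
      rw [Matrix.adjugate_mul_distrib, hVtr]
      noncomm_ring
    ext i j
    show deriv (fun y => F u y i j) v = _
    have hee : (fun y => F u y i j) =ᶠ[nhds v]
        (fun y => (Ψp u y * (Ψm u y).adjugate) i j) := by
      filter_upwards [hJopen.mem_nhds hv] with y hy
      rw [hF, myinv_eq_adj (hΨmdet u hu y hy)]
    rw [hee.deriv_eq]
    have hD := hasDerivAt_entry_mul hPv (fun i j => hasDerivAt_adj hMv i j) i j
    rw [hD.deriv]
    exact congrFun (congrFun hmat i) j
  -- convenient forms of F and N
  have hFeq : F u v = Ψp u v * (1 : Matrix (Fin 2) (Fin 2) ℝ) * (Ψm u v).adjugate := by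
    rw [hF, myinv_eq_adj dM, Matrix.mul_one]
  have hNeq : N u v = Ψp u v * (-kmat) * (Ψm u v).adjugate := by
    rw [hN, myinv_eq_adj dM]
    noncomm_ring
  refine ⟨?_, ?_, ?_, ?_, ?_, ?_, ?_, ?_⟩
  · -- ⟨F,F⟩ = -1
    rw [hFeq, form2_self]
    simp [Matrix.det_mul, dP, dAdj]
  · -- ⟨F_u,F_u⟩ = 0
    rw [hFu, hAmat, form2_conj, dP, dAdj, form2_self]
    simp [Matrix.det_fin_two_of]
  · -- ⟨F_v,F_v⟩ = 0
    rw [hFv, hBmat, form2_conj, dP, dAdj, form2_self]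
    simp [Matrix.det_fin_two_of]
  · -- conformal factor
    rw [hFu, hFv, hAmat, hBmat, form2_conj, dP, dAdj, form2_lower_upper]
    have h2 := hτf u hu
    have h3 := hτg v hv
    have key : (c * lam τ u * Real.exp (ω u v / 2)) * (c * nu τ v * Real.exp (ω u v / 2))
        = τ ^ 2 * (1 - c * (f u) ^ 2) * (1 - c * (g v) ^ 2) * Real.exp (ω u v) /
            ((τ ^ 2 - c * (f u) ^ 2) * (τ ^ 2 - c * (g v) ^ 2)) := by
      have hexp : Real.exp (ω u v) = Real.exp (ω u v / 2) * Real.exp (ω u v / 2) := by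
        rw [← Real.exp_add]; ring_nf
      rcases hc with h | h <;> subst h <;>
        · rw [hlam, hnu, hexp]
          field_simp
    linear_combination key
  · -- ⟨N,N⟩ = 1
    rw [hNeq, form2_conj, dP, dAdj, form2_negk_negk]
    norm_num
  · -- ⟨N,F⟩ = 0
    rw [hNeq, hFeq, form2_conj, dP, dAdj, form2_negk_one]
    norm_num
  · -- ⟨N,F_u⟩ = 0
    rw [hNeq, hFu, hAmat, form2_conj, dP, dAdj, form2_negk_lower]
    norm_num
  · -- ⟨N,F_v⟩ = 0
    rw [hNeq, hFv, hBmat, form2_conj, dP, dAdj, form2_negk_upper]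
    norm_num
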